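/- With the Kronecker-product construction below, let σ ∈ {−1, +1} and set σ' := (−1)^{(m−2)/2} σ. Suppose j_1 : ℂ^{2^{m/2}} → ℂ^{2^{m/2}} is a conjugate-linear map with j_1(γ_μ φ) = σ γ_μ j_1(φ) for all μ and φ, and j_2 : ℂ^{2^⌊k/2⌋} → ℂ^{2^⌊k/2⌋} is a conjugate-linear map with j_2(γ̃_j ψ) = σ' γ̃_j j_2(ψ) for all j and ψ. Let J be the conjugate-linear map on ℂ^{2^{m/2}} ⊗ ℂ^{2^⌊k/2⌋} determined by J(φ ⊗ ψ) = j_1(φ) ⊗ j_2(ψ). Then J(Γ_a Ξ) = σ Γ_a J(Ξ) for every index a = 0, …, m+k−1 and every Ξ ∈ ℂ^{2^{m/2}} ⊗ ℂ^{2^⌊k/2⌋}. -/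

import Mathlib

open Matrix Kronecker

/-- The Minkowski chirality operator `Γ_M := i ^ ⌊(m-1)/2⌋ γ₀ ⋯ γ_{m-1}`. -/
noncomputable def minkChirality (m : ℕ)
    (γ : Fin m → Matrix (Fin (2 ^ (m / 2))) (Fin (2 ^ (m / 2))) ℂ) :
    Matrix (Fin (2 ^ (m / 2))) (Fin (2 ^ (m / 2))) ℂ :=
  (Complex.I ^ ((m - 1) / 2)) • (List.ofFn γ).prod

/-- The Kronecker-product construction of higher-dimensional gamma matrices. -/
noncomputable def bigGamma (m k : ℕ)
    (γ : Fin m → Matrix (Fin (2 ^ (m / 2))) (Fin (2 ^ (m / 2))) ℂ)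
    (γt : Fin k → Matrix (Fin (2 ^ (k / 2))) (Fin (2 ^ (k / 2))) ℂ) :
    Fin (m + k) →
      Matrix (Fin (2 ^ (m / 2)) × Fin (2 ^ (k / 2))) (Fin (2 ^ (m / 2)) × Fin (2 ^ (k / 2))) ℂ :=
  fun a =>
    if h : (a : ℕ) < m then (γ ⟨a, h⟩) ⊗ₖ (1 : Matrix (Fin (2 ^ (k / 2))) (Fin (2 ^ (k / 2))) ℂ)
    else (minkChirality m γ) ⊗ₖ (γt ⟨(a : ℕ) - m, by have := a.isLt; omega⟩)

/-- The tensor product `φ ⊗ ψ` of two vectors, realized as a vector indexed by pairs. -/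
def tensorVec {M K : ℕ} (φ : Fin M → ℂ) (ψ : Fin K → ℂ) : Fin M × Fin K → ℂ :=
  fun p => φ p.1 * ψ p.2

lemma tensorVec_smul_left {M K : ℕ} (c : ℂ) (φ : Fin M → ℂ) (ψ : Fin K → ℂ) :
    tensorVec (c • φ) ψ = c • tensorVec φ ψ := by
  funext p; simp [tensorVec, mul_assoc]

lemma tensorVec_smul_right {M K : ℕ} (c : ℂ) (φ : Fin M → ℂ) (ψ : Fin K → ℂ) :
    tensorVec φ (c • ψ) = c • tensorVec φ ψ := by
  funext p; simp [tensorVec]; ring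

lemma kron_mulVec_tensor {M K : ℕ} (A : Matrix (Fin M) (Fin M) ℂ)
    (B : Matrix (Fin K) (Fin K) ℂ) (φ : Fin M → ℂ) (ψ : Fin K → ℂ) :
    (A ⊗ₖ B) *ᵥ tensorVec φ ψ = tensorVec (A *ᵥ φ) (B *ᵥ ψ) := by
  funext p
  simp only [Matrix.mulVec, dotProduct, tensorVec, Matrix.kroneckerMap_apply,
    Fintype.sum_prod_type, Finset.sum_mul, Finset.mul_sum]
  rw [Finset.sum_comm]
  refine Finset.sum_congr rfl fun i _ => Finset.sum_congr rfl fun j _ => by ring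

lemma single_eq_tensor {M K : ℕ} (p : Fin M × Fin K) :
    (Pi.single p (1 : ℂ)) = tensorVec (Pi.single p.1 1) (Pi.single p.2 1) := by
  funext q
  rcases p with ⟨i, j⟩; rcases q with ⟨i', j'⟩
  simp only [tensorVec, Pi.single_apply, Prod.mk.injEq]
  by_cases h1 : i' = i <;> by_cases h2 : j' = j <;> simp [h1, h2]

/-- if `j₁` and `j₂` are conjugate-linear maps intertwining the lower-dimensional
gamma matrices with signs `σ` and `σ' = (-1) ^ ((m-2)/2) σ` respectively, then the
conjugate-linear map `J` determined by `J(φ ⊗ ψ) = j₁(φ) ⊗ j₂(ψ)` intertwines all the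
higher-dimensional gamma matrices `Γ_a` with the sign `σ`. -/
theorem tensor_conjugation_intertwines (m k : ℕ) (hm : Even m) (hm2 : 2 ≤ m) (hk : 1 ≤ k)
    (γ : Fin m → Matrix (Fin (2 ^ (m / 2))) (Fin (2 ^ (m / 2))) ℂ)
    (hγ : ∀ μ ν : Fin m,
      γ μ * γ ν + γ ν * γ μ
        = (if μ = ν then (if (μ : ℕ) = 0 then (2 : ℂ) else -2) else 0) • (1 : Matrix _ _ ℂ))
    (γt : Fin k → Matrix (Fin (2 ^ (k / 2))) (Fin (2 ^ (k / 2))) ℂ)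
    (hγt : ∀ j l : Fin k,
      γt j * γt l + γt l * γt j = (if j = l then (-2 : ℂ) else 0) • (1 : Matrix _ _ ℂ))
    (σ σ' : ℂ) (hσ : σ = 1 ∨ σ = -1) (hσ' : σ' = (-1 : ℂ) ^ ((m - 2) / 2) * σ)
    (j₁ : (Fin (2 ^ (m / 2)) → ℂ) → (Fin (2 ^ (m / 2)) → ℂ))
    (h₁add : ∀ φ₁ φ₂, j₁ (φ₁ + φ₂) = j₁ φ₁ + j₁ φ₂)
    (h₁smul : ∀ (c : ℂ) φ, j₁ (c • φ) = (starRingEnd ℂ c) • j₁ φ)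
    (h₁γ : ∀ (μ : Fin m) φ, j₁ (γ μ *ᵥ φ) = σ • (γ μ *ᵥ j₁ φ))
    (j₂ : (Fin (2 ^ (k / 2)) → ℂ) → (Fin (2 ^ (k / 2)) → ℂ))
    (h₂add : ∀ ψ₁ ψ₂, j₂ (ψ₁ + ψ₂) = j₂ ψ₁ + j₂ ψ₂)
    (h₂smul : ∀ (c : ℂ) ψ, j₂ (c • ψ) = (starRingEnd ℂ c) • j₂ ψ)
    (h₂γ : ∀ (l : Fin k) ψ, j₂ (γt l *ᵥ ψ) = σ' • (γt l *ᵥ j₂ ψ))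
    (J : (Fin (2 ^ (m / 2)) × Fin (2 ^ (k / 2)) → ℂ) → (Fin (2 ^ (m / 2)) × Fin (2 ^ (k / 2)) → ℂ))
    (hJadd : ∀ Ξ₁ Ξ₂, J (Ξ₁ + Ξ₂) = J Ξ₁ + J Ξ₂)
    (hJsmul : ∀ (c : ℂ) Ξ, J (c • Ξ) = (starRingEnd ℂ c) • J Ξ)
    (hJtensor : ∀ (φ : Fin (2 ^ (m / 2)) → ℂ) (ψ : Fin (2 ^ (k / 2)) → ℂ),
      J (tensorVec φ ψ) = tensorVec (j₁ φ) (j₂ ψ)) :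
    ∀ (a : Fin (m + k)) (Ξ : Fin (2 ^ (m / 2)) × Fin (2 ^ (k / 2)) → ℂ),
      J (bigGamma m k γ γt a *ᵥ Ξ) = σ • (bigGamma m k γ γt a *ᵥ J Ξ) := by
  -- σ ^ m = 1
  have hσm : σ ^ m = 1 := by
    obtain ⟨t, ht⟩ := hm
    rcases hσ with h | h <;> subst h
    · simp
    · exact Even.neg_one_pow ⟨t, ht⟩
  -- (-1)^((m-2)/2) * σ' = σ
  have hsign : ((-1 : ℂ) ^ ((m - 2) / 2)) * σ' = σ := by
    rw [hσ', ← mul_assoc, ← pow_add, Even.neg_one_pow ⟨(m - 2) / 2, rfl⟩, one_mul]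
  -- J sends 0 to 0
  have hJzero : J 0 = 0 := by
    have := hJsmul 0 0
    simpa using this
  -- J commutes with finite sums
  have hJsum : ∀ (s : Finset (Fin (2 ^ (m / 2)) × Fin (2 ^ (k / 2))))
      (f : (Fin (2 ^ (m / 2)) × Fin (2 ^ (k / 2))) →
        (Fin (2 ^ (m / 2)) × Fin (2 ^ (k / 2)) → ℂ)),
      J (∑ p ∈ s, f p) = ∑ p ∈ s, J (f p) := by
    intro s f
    induction s using Finset.induction_on with
    | empty => simpa using hJzero
    | insert _ _ hnot ih => rw [Finset.sum_insert hnot, hJadd, ih, Finset.sum_insert hnot]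
  -- j₁ intertwines products of gammas
  have hlist : ∀ (l : List (Fin m)) (φ : Fin (2 ^ (m / 2)) → ℂ),
      j₁ ((l.map γ).prod *ᵥ φ) = σ ^ l.length • ((l.map γ).prod *ᵥ j₁ φ) := by
    intro l
    induction l with
    | nil => intro φ; simp [Matrix.one_mulVec]
    | cons μ t ih =>
      intro φ
      simp only [List.map_cons, List.prod_cons, List.length_cons, ← Matrix.mulVec_mulVec]
      rw [h₁γ, ih, Matrix.mulVec_smul, smul_smul]
      congr 1
      ring
  -- j₁ intertwines the chirality operator with sign (-1)^((m-2)/2)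
  have hchir : ∀ φ, j₁ (minkChirality m γ *ᵥ φ)
      = ((-1 : ℂ) ^ ((m - 2) / 2)) • (minkChirality m γ *ᵥ j₁ φ) := by
    intro φ
    have hq : (m - 1) / 2 = (m - 2) / 2 := by
      obtain ⟨t, ht⟩ := hm; omega
    have hofn : (List.ofFn γ).prod = ((List.finRange m).map γ).prod := by
      rw [List.ofFn_eq_map]
    have hlen : (List.finRange m).length = m := List.length_finRange
    rw [minkChirality, Matrix.smul_mulVec, h₁smul, hofn, hlist, hlen, hσm,
      Matrix.smul_mulVec, map_pow, Complex.conj_I, hq, one_smul, smul_smul, neg_pow]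
  intro a Ξ
  set G := bigGamma m k γ γt a with hG
  -- the key tensor-vector case
  have key : ∀ (φ : Fin (2 ^ (m / 2)) → ℂ) (ψ : Fin (2 ^ (k / 2)) → ℂ),
      J (G *ᵥ tensorVec φ ψ) = σ • (G *ᵥ J (tensorVec φ ψ)) := by
    intro φ ψ
    by_cases h : (a : ℕ) < m
    · rw [hG, bigGamma, dif_pos h, kron_mulVec_tensor, Matrix.one_mulVec, hJtensor, h₁γ,
        tensorVec_smul_left, hJtensor, kron_mulVec_tensor, Matrix.one_mulVec]
    · rw [hG, bigGamma, dif_neg h, kron_mulVec_tensor, hJtensor, h₂γ, hchir,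
        tensorVec_smul_left, tensorVec_smul_right, hJtensor, kron_mulVec_tensor,
        smul_smul, hsign]
  set e : Fin (2 ^ (m / 2)) × Fin (2 ^ (k / 2)) → (Fin (2 ^ (m / 2)) × Fin (2 ^ (k / 2)) → ℂ) :=
    fun p => Pi.single p (1 : ℂ) with he
  -- decompose Ξ into a sum of tensor vectors
  have hΞ : Ξ = ∑ p : Fin (2 ^ (m / 2)) × Fin (2 ^ (k / 2)), Ξ p • e p := by
    funext q
    simp [he, Finset.sum_apply, Pi.single_apply]
  have hJΞ : J Ξ = ∑ p : Fin (2 ^ (m / 2)) × Fin (2 ^ (k / 2)),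
      (starRingEnd ℂ (Ξ p)) • J (e p) := by
    conv_lhs => rw [hΞ]
    rw [hJsum]
    exact Finset.sum_congr rfl fun p _ => hJsmul _ _
  calc J (G *ᵥ Ξ)
      = J (∑ p : Fin (2 ^ (m / 2)) × Fin (2 ^ (k / 2)), Ξ p • (G *ᵥ e p)) := by
        conv_lhs => rw [hΞ]
        refine congrArg J ?_
        simp only [← Matrix.mulVecLin_apply]
        rw [map_sum]
        exact Finset.sum_congr rfl fun p _ => map_smul _ _ _
    _ = ∑ p : Fin (2 ^ (m / 2)) × Fin (2 ^ (k / 2)),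
        (starRingEnd ℂ (Ξ p)) • J (G *ᵥ e p) := by
        rw [hJsum]
        exact Finset.sum_congr rfl fun p _ => hJsmul _ _
    _ = ∑ p : Fin (2 ^ (m / 2)) × Fin (2 ^ (k / 2)),
        (starRingEnd ℂ (Ξ p)) • (σ • (G *ᵥ J (e p))) := by
        refine Finset.sum_congr rfl fun p _ => ?_
        simp only [he]
        rw [single_eq_tensor, key]
    _ = σ • (G *ᵥ J Ξ) := by
        rw [hJΞ, ← Matrix.mulVecLin_apply, map_sum, Finset.smul_sum]
        refine Finset.sum_congr rfl fun p _ => ?_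
        rw [Matrix.mulVecLin_apply, Matrix.mulVec_smul, smul_comm]
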